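/- Let n ≥ 2, let λ be a partition of n−2, μ a partition of n−1 and ξ a partition of n, such that the Young diagram of μ is obtained from that of λ by adding one cell and the diagram of ξ is obtained from that of μ by adding one cell. Let c₁ be the content of the cell ξ/μ and c₂ the content of the cell μ/λ (the content of a cell in row i, column j being j − i). Then the endomorphism i_{λμ} ∘ i_{μξ} ∘ ρ_ξ((n−1 n)) ∘ i_{ξμ} ∘ i_{μλ} of W^λ equals (1/(c₁ − c₂)) · id; that is, it equals cos θ · id, where θ ∈ [0,π] is defined by cos θ = 1/(c₁ − c₂). -/

import Mathlib

noncomputable section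

namespace WLE

/-- A filling (bijective labelling of the cells of `μ` by `Fin μ.card`) is *standard* if
its entries increase strictly along rows and columns. -/
def IsStandard (μ : YoungDiagram) (f : {c : ℕ × ℕ // c ∈ μ.cells} ≃ Fin μ.card) : Prop :=
  ∀ c c' : {c : ℕ × ℕ // c ∈ μ.cells},
    ((c.1.1 = c'.1.1 ∧ c.1.2 < c'.1.2) ∨ (c.1.2 = c'.1.2 ∧ c.1.1 < c'.1.1)) →
      f c < f c'

/-- A standard Young tableau of shape `μ`: a bijection from the cells of `μ` to
`Fin μ.card` (0-indexed entries; the paper's entry `k ∈ {1,…,n}` corresponds to the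
value `k − 1 : Fin μ.card`) increasing along rows and columns. -/
def SYT (μ : YoungDiagram) : Type :=
  {f : {c : ℕ × ℕ // c ∈ μ.cells} ≃ Fin μ.card // IsStandard μ f}

instance (μ : YoungDiagram) : Finite (SYT μ) := by
  have : Finite ({c : ℕ × ℕ // c ∈ μ.cells} ≃ Fin μ.card) :=
    Finite.of_injective (fun f => (f : {c : ℕ × ℕ // c ∈ μ.cells} → Fin μ.card))
      fun f g h => Equiv.coe_fn_injective h
  exact Subtype.finite

noncomputable instance (μ : YoungDiagram) : Fintype (SYT μ) := Fintype.ofFinite _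

noncomputable instance (μ : YoungDiagram) : DecidableEq (SYT μ) := Classical.decEq _

/-- `content T k` is the content `j − i` of the cell (row `i`, column `j`, 0-indexed)
of `T` containing the entry `k`. -/
def content {μ : YoungDiagram} (T : SYT μ) (k : Fin μ.card) : ℤ :=
  ((T.1.symm k).1.2 : ℤ) - ((T.1.symm k).1.1 : ℤ)

/-- The index `k − 1` (in `Fin μ.card`), used to form the adjacent transposition
`(k−1 k)`. -/
def kpred {μ : YoungDiagram} (k : Fin μ.card) : Fin μ.card :=
  ⟨k.val - 1, lt_of_le_of_lt (Nat.sub_le _ _) k.isLt⟩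

/-- The filling obtained from `T` by exchanging the entries `k−1` and `k`. -/
def swapped {μ : YoungDiagram} (k : Fin μ.card) (T : SYT μ) :
    {c : ℕ × ℕ // c ∈ μ.cells} ≃ Fin μ.card :=
  T.1.trans (Equiv.swap (kpred k) k)

/-- The (real) axial distance `d = c_T(k) − c_T(k−1)`. -/
def dval {μ : YoungDiagram} (k : Fin μ.card) (T : SYT μ) : ℝ :=
  ((content T k - content T (kpred k) : ℤ) : ℝ)

noncomputable instance (μ : YoungDiagram) : DecidablePred (IsStandard μ) :=
  fun _ => Classical.propDecidable _

/-- The Young orthogonal form operator `s_k` on `W^μ = EuclideanSpace ℝ (SYT μ)`: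
`s_k e_T = (1/d) e_T + √(1 − 1/d²) e_{(k−1 k)T}`, with `d = c_T(k) − c_T(k−1)` and
`e_{(k−1 k)T} = 0` when the swapped filling is not standard. -/
def youngOp (μ : YoungDiagram) (k : Fin μ.card) :
    EuclideanSpace ℝ (SYT μ) →ₗ[ℝ] EuclideanSpace ℝ (SYT μ) where
  toFun x := WithLp.toLp 2 fun T => (dval k T)⁻¹ * x T +
    Real.sqrt (1 - ((dval k T)⁻¹) ^ 2) *
      (if h : IsStandard μ (swapped k T) then x ⟨swapped k T, h⟩ else 0)
  map_add' x y := by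
    ext T
    by_cases h : IsStandard μ (swapped k T) <;>
      simp [h, PiLp.add_apply] <;>
      first | (rw [show x.ofLp + y.ofLp = fun S => x.ofLp S + y.ofLp S from rfl]; ring) | ring
  map_smul' c x := by
    ext T
    by_cases h : IsStandard μ (swapped k T) <;>
      simp [h, PiLp.smul_apply, smul_eq_mul] <;>
      first | (rw [show c • x.ofLp = fun S => c * x.ofLp S from rfl]; ring) | ring

end WLE

namespace WLE

open scoped RealInnerProductSpace


lemma leftover {lam mu : YoungDiagram} (hsub : lam.cells ⊆ mu.cells)
    (hcard : mu.card = lam.card + 1) {c2 : ℕ × ℕ} (h2m : c2 ∈ mu.cells) (h2l : c2 ∉ lam.cells)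
    (T : SYT lam) (U : SYT mu)
    (hext : ∀ (c : ℕ × ℕ) (hc : c ∈ lam.cells),
      ((U.1 ⟨c, hsub hc⟩ : Fin mu.card) : ℕ) = ((T.1 ⟨c, hc⟩ : Fin lam.card) : ℕ)) :
    U.1 ⟨c2, h2m⟩ = ⟨lam.card, by omega⟩ := by
  set v : Fin mu.card := ⟨lam.card, by omega⟩ with hv
  set cs := U.1.symm v with hcs
  have hUcs : U.1 cs = v := U.1.apply_symm_apply v
  have hcsl : cs.1 ∉ lam.cells := by
    intro h
    have h1 := hext cs.1 h
    have hcseq : (⟨cs.1, hsub h⟩ : {c : ℕ × ℕ // c ∈ mu.cells}) = cs := Subtype.ext rfl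
    rw [hcseq, hUcs] at h1
    have h2 : (v : ℕ) = lam.card := rfl
    have hlt := (T.1 ⟨cs.1, h⟩).isLt
    omega
  have hsd : (mu.cells \ lam.cells).card = 1 := by
    rw [Finset.card_sdiff_of_subset hsub]
    have h1 : mu.cells.card = mu.card := rfl
    have h2 : lam.cells.card = lam.card := rfl
    omega
  obtain ⟨a, ha⟩ := Finset.card_eq_one.mp hsd
  have h2a : c2 = a := by
    have h3 : c2 ∈ mu.cells \ lam.cells := Finset.mem_sdiff.mpr ⟨h2m, h2l⟩
    rw [ha] at h3; exact Finset.mem_singleton.mp h3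
  have hcsa : cs.1 = a := by
    have h3 : cs.1 ∈ mu.cells \ lam.cells := Finset.mem_sdiff.mpr ⟨cs.2, hcsl⟩
    rw [ha] at h3; exact Finset.mem_singleton.mp h3
  have h4 : (⟨c2, h2m⟩ : {c : ℕ × ℕ // c ∈ mu.cells}) = cs := Subtype.ext (h2a.trans hcsa.symm)
  rw [h4, hUcs]

lemma ext_injective {lam mu : YoungDiagram} (hsub : lam.cells ⊆ mu.cells)
    (ext : SYT lam → SYT mu)
    (hext : ∀ (T : SYT lam) (c : ℕ × ℕ) (hc : c ∈ lam.cells),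
      (((ext T).1 ⟨c, hsub hc⟩ : Fin mu.card) : ℕ) = ((T.1 ⟨c, hc⟩ : Fin lam.card) : ℕ)) :
    Function.Injective ext := by
  intro T T' h
  apply Subtype.ext
  apply Equiv.coe_fn_injective
  funext c
  apply Fin.ext
  have h1 := hext T c.1 c.2
  have h2 := hext T' c.1 c.2
  rw [h] at h1
  rw [h1] at h2
  exact h2

/-- Let `n ≥ 2`, let `λ ⊂ μ ⊂ ξ` be partitions of `n−2`, `n−1`, `n`
respectively, each obtained from the previous by adding one cell.  Let `c₁` be the
content of the cell `ξ/μ` and `c₂` the content of the cell `μ/λ`.  With the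
box-adding maps `i_{μλ} : W^λ → W^μ` and `i_{ξμ} : W^μ → W^ξ`, their adjoints
`i_{λμ}, i_{μξ}`, and the Young orthogonal form representation `ρ_ξ`, the
endomorphism `i_{λμ} ∘ i_{μξ} ∘ ρ_ξ((n−1 n)) ∘ i_{ξμ} ∘ i_{μλ}` of `W^λ` equals
`(1/(c₁−c₂)) · id = cos θ · id`, where `cos θ = 1/(c₁−c₂)`, `θ ∈ [0,π]`. -/
theorem composite_eq_cos_smul_id (lam mu xi : YoungDiagram) (hn : 2 ≤ xi.card)
    (hsub1 : lam.cells ⊆ mu.cells) (hcard1 : mu.card = lam.card + 1)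
    (hsub2 : mu.cells ⊆ xi.cells) (hcard2 : xi.card = mu.card + 1)
    (cell1 : ℕ × ℕ) (hcell1 : cell1 ∈ xi.cells ∧ cell1 ∉ mu.cells)
    (cell2 : ℕ × ℕ) (hcell2 : cell2 ∈ mu.cells ∧ cell2 ∉ lam.cells)
    (ext1 : SYT lam → SYT mu)
    (hext1 : ∀ (T : SYT lam) (c : ℕ × ℕ) (hc : c ∈ lam.cells),
      (((ext1 T).1 ⟨c, hsub1 hc⟩ : Fin mu.card) : ℕ) = ((T.1 ⟨c, hc⟩ : Fin lam.card) : ℕ))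
    (ext2 : SYT mu → SYT xi)
    (hext2 : ∀ (T : SYT mu) (c : ℕ × ℕ) (hc : c ∈ mu.cells),
      (((ext2 T).1 ⟨c, hsub2 hc⟩ : Fin xi.card) : ℕ) = ((T.1 ⟨c, hc⟩ : Fin mu.card) : ℕ))
    (i1 : EuclideanSpace ℝ (SYT lam) →ₗ[ℝ] EuclideanSpace ℝ (SYT mu))
    (hi1 : ∀ T : SYT lam,
      i1 (EuclideanSpace.single T (1 : ℝ)) = EuclideanSpace.single (ext1 T) (1 : ℝ))
    (i2 : EuclideanSpace ℝ (SYT mu) →ₗ[ℝ] EuclideanSpace ℝ (SYT xi))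
    (hi2 : ∀ T : SYT mu,
      i2 (EuclideanSpace.single T (1 : ℝ)) = EuclideanSpace.single (ext2 T) (1 : ℝ))
    (iadj1 : EuclideanSpace ℝ (SYT mu) →ₗ[ℝ] EuclideanSpace ℝ (SYT lam))
    (hadj1 : ∀ (x : EuclideanSpace ℝ (SYT mu)) (y : EuclideanSpace ℝ (SYT lam)),
      ⟪iadj1 x, y⟫ = ⟪x, i1 y⟫)
    (iadj2 : EuclideanSpace ℝ (SYT xi) →ₗ[ℝ] EuclideanSpace ℝ (SYT mu))
    (hadj2 : ∀ (x : EuclideanSpace ℝ (SYT xi)) (y : EuclideanSpace ℝ (SYT mu)),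
      ⟪iadj2 x, y⟫ = ⟪x, i2 y⟫)
    (ρxi : Equiv.Perm (Fin xi.card) →* (Module.End ℝ (EuclideanSpace ℝ (SYT xi)))ˣ)
    (hρxi : ∀ k : Fin xi.card, 1 ≤ k.val →
      ((ρxi (Equiv.swap (kpred k) k) : Module.End ℝ (EuclideanSpace ℝ (SYT xi)))) =
        youngOp xi k) :
    iadj1 ∘ₗ iadj2 ∘ₗ
        ((ρxi (Equiv.swap (kpred (⟨xi.card - 1, by omega⟩ : Fin xi.card))
            (⟨xi.card - 1, by omega⟩ : Fin xi.card)) :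
          Module.End ℝ (EuclideanSpace ℝ (SYT xi)))) ∘ₗ i2 ∘ₗ i1 =
      ((((cell1.2 : ℤ) - (cell1.1 : ℤ)) - ((cell2.2 : ℤ) - (cell2.1 : ℤ)) : ℤ) : ℝ)⁻¹ •
        (LinearMap.id : EuclideanSpace ℝ (SYT lam) →ₗ[ℝ] EuclideanSpace ℝ (SYT lam)) := by
  have hklt : xi.card - 1 < xi.card := by omega
  set k : Fin xi.card := ⟨xi.card - 1, hklt⟩ with hkdef
  -- evaluation lemmas for the adjoints
  have heval1 : ∀ (x : EuclideanSpace ℝ (SYT mu)) (T'' : SYT lam),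
      iadj1 x T'' = x (ext1 T'') := by
    intro x T''
    have h := hadj1 x (EuclideanSpace.single T'' 1)
    rw [hi1] at h
    simpa [EuclideanSpace.inner_single_right] using h
  have heval2 : ∀ (x : EuclideanSpace ℝ (SYT xi)) (U : SYT mu),
      iadj2 x U = x (ext2 U) := by
    intro x U
    have h := hadj2 x (EuclideanSpace.single U 1)
    rw [hi2] at h
    simpa [EuclideanSpace.inner_single_right] using h
  -- values at the extremal cells
  have hext1cell2 : ∀ T'' : SYT lam,
      (ext1 T'').1 ⟨cell2, hcell2.1⟩ = ⟨lam.card, by omega⟩ := fun T'' =>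
    leftover hsub1 hcard1 hcell2.1 hcell2.2 T'' (ext1 T'') (hext1 T'')
  have hScell1 : ∀ U : SYT mu,
      (ext2 U).1 ⟨cell1, hcell1.1⟩ = k := by
    intro U
    have h := leftover hsub2 hcard2 hcell1.1 hcell1.2 U (ext2 U) (hext2 U)
    rw [h]; apply Fin.ext; show mu.card = xi.card - 1; omega
  have hScell2 : ∀ T'' : SYT lam,
      (ext2 (ext1 T'')).1 ⟨cell2, hsub2 hcell2.1⟩ = kpred k := by
    intro T''
    apply Fin.ext
    have h1 := hext2 (ext1 T'') cell2 hcell2.1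
    rw [hext1cell2 T''] at h1
    rw [h1]
    show lam.card = (xi.card - 1) - 1
    omega
  have hkpredne : kpred k ≠ k := by
    intro h
    have := congrArg Fin.val h
    have h1 : (kpred k).val = xi.card - 1 - 1 := rfl
    have h2 : k.val = xi.card - 1 := rfl
    omega
  -- the swapped filling is never in the image of ext2
  have hswapne : ∀ T'' : SYT lam, ∀ U : SYT lam,
      swapped k (ext2 (ext1 T'')) ≠ (ext2 (ext1 U)).1 := by
    intro T'' U h
    have h1 : swapped k (ext2 (ext1 T'')) ⟨cell2, hsub2 hcell2.1⟩ = k := by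
      show Equiv.swap (kpred k) k ((ext2 (ext1 T'')).1 ⟨cell2, hsub2 hcell2.1⟩) = k
      rw [hScell2 T'', Equiv.swap_apply_left]
    rw [h] at h1
    rw [hScell2 U] at h1
    exact hkpredne h1
  have hSinj : Function.Injective (fun T'' : SYT lam => ext2 (ext1 T'')) :=
    (ext_injective hsub2 ext2 hext2).comp (ext_injective hsub1 ext1 hext1)
  -- the axial distance
  have hdval : ∀ T'' : SYT lam, dval k (ext2 (ext1 T'')) =
      ((((cell1.2 : ℤ) - (cell1.1 : ℤ)) - ((cell2.2 : ℤ) - (cell2.1 : ℤ)) : ℤ) : ℝ) := by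
    intro T''
    have hs1 : (ext2 (ext1 T'')).1.symm k = ⟨cell1, hcell1.1⟩ := by
      rw [← hScell1 (ext1 T''), Equiv.symm_apply_apply]
    have hs2 : (ext2 (ext1 T'')).1.symm (kpred k) = ⟨cell2, hsub2 hcell2.1⟩ := by
      rw [← hScell2 T'', Equiv.symm_apply_apply]
    unfold dval content
    rw [hs1, hs2]
  -- prove equality on basis vectors
  apply Module.Basis.ext (PiLp.basisFun 2 ℝ (SYT lam))
  intro T
  have hb : (PiLp.basisFun 2 ℝ (SYT lam)) T = EuclideanSpace.single T 1 := by
    rw [PiLp.basisFun_apply]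
  rw [hb]
  simp only [LinearMap.comp_apply, LinearMap.smul_apply, LinearMap.id_apply]
  rw [hi1, hi2, hρxi k (by show 1 ≤ xi.card - 1; omega)]
  ext T''
  rw [heval1, heval2]
  simp only [youngOp, LinearMap.coe_mk, AddHom.coe_mk]
  have hdite : (if h : IsStandard xi (swapped k (ext2 (ext1 T''))) then
      (EuclideanSpace.single (ext2 (ext1 T)) (1:ℝ)) (⟨swapped k (ext2 (ext1 T'')), h⟩ : SYT xi)
      else 0) = 0 := by
    split
    next h =>
      erw [EuclideanSpace.single_apply]
      rw [if_neg]
      intro heq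
      exact hswapne T'' T (congrArg Subtype.val heq)
    next => rfl
  rw [hdite, mul_zero, add_zero, hdval T'']
  simp only [PiLp.smul_apply, smul_eq_mul]
  by_cases hTT : T'' = T
  · subst hTT
    rw [EuclideanSpace.single_apply, if_pos rfl, EuclideanSpace.single_apply, if_pos rfl]
  · have h1 : (EuclideanSpace.single (ext2 (ext1 T)) (1:ℝ)) (ext2 (ext1 T'')) = 0 := by
      rw [EuclideanSpace.single_apply, if_neg]
      intro h
      exact hTT (hSinj h)
    rw [h1, EuclideanSpace.single_apply, if_neg hTT, mul_zero]
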